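/- Let l : [t_j, t_{j+1}] → ℝ² be 1-Lipschitz with t_{j+1} − t_j = Δ, and suppose the man is at q_j at time t_{j+1} with ‖q_j − l(t_j)‖ = r, then moves to a point q_{j+1} with ‖q_{j+1} − l(t_{j+1})‖ = r and ‖q_j − q_{j+1}‖ ≥ (1+ε)Δ. Let q'_{j+1} = q_j + (l(t_{j+1}) − l(t_j)). Then ‖q_{j+1} − q'_{j+1}‖ ≥ εΔ, and consequently the angle on the circle of radius r centered at l(t_{j+1}) between q'_{j+1} and q_{j+1} is at least εΔ/r. -/

import Mathlib

open Set

/-- If `‖q_j − l(t_j)‖ = r`, `‖q_{j+1} − l(t_j+Δ)‖ = r`, `‖q_j − q_{j+1}‖ ≥ (1+ε)Δ`,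
and the lion `l` is `1`-Lipschitz, then with `q'_{j+1} = q_j + (l(t_j+Δ) − l(t_j))`
we have `‖q_{j+1} − q'_{j+1}‖ ≥ εΔ`, and the central angle `α` on the circle of
radius `r` centered at `l(t_j+Δ)` between `q'_{j+1}` and `q_{j+1}`, determined by
`2r·sin(α/2) = ‖q_{j+1} − q'_{j+1}‖` (i.e. `α = 2·arcsin(chord/(2r))`), is at
least `εΔ/r`. -/
theorem stmt_12 (r Δ ε tj : ℝ) (hr : 0 < r) (hΔ : 0 < Δ) (hε : 0 < ε)
    (hεΔ : ε * Δ ≤ 2 * r)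
    (l : ℝ → ℂ)
    (hl : ∀ s ∈ Icc tj (tj + Δ), ∀ t ∈ Icc tj (tj + Δ), ‖l s - l t‖ ≤ |s - t|)
    (qj qj1 : ℂ)
    (hqj : ‖qj - l tj‖ = r)
    (hqj1 : ‖qj1 - l (tj + Δ)‖ = r)
    (hstep : (1 + ε) * Δ ≤ ‖qj - qj1‖) :
    ε * Δ ≤ ‖qj1 - (qj + (l (tj + Δ) - l tj))‖
    ∧ ε * Δ / r
      ≤ 2 * Real.arcsin (‖qj1 - (qj + (l (tj + Δ) - l tj))‖ / (2 * r)) := by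
  have hmem1 : tj ∈ Icc tj (tj + Δ) := ⟨le_refl _, by linarith⟩
  have hmem2 : tj + Δ ∈ Icc tj (tj + Δ) := ⟨by linarith, le_refl _⟩
  have hlip : ‖l (tj + Δ) - l tj‖ ≤ Δ := by
    have := hl (tj + Δ) hmem2 tj hmem1
    rwa [show tj + Δ - tj = Δ by ring, abs_of_pos hΔ] at this
  have hd : ε * Δ ≤ ‖qj1 - (qj + (l (tj + Δ) - l tj))‖ := by
    have h1 : ‖qj - qj1‖ ≤ ‖qj1 - (qj + (l (tj + Δ) - l tj))‖ + ‖l (tj + Δ) - l tj‖ := by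
      have : qj - qj1 = -((qj1 - (qj + (l (tj + Δ) - l tj))) + (l (tj + Δ) - l tj)) := by ring
      rw [this, norm_neg]
      exact norm_add_le _ _
    nlinarith
  refine ⟨hd, ?_⟩
  set d := ‖qj1 - (qj + (l (tj + Δ) - l tj))‖ with hdd
  have hx0 : 0 ≤ ε * Δ / (2 * r) := by positivity
  have hx1 : ε * Δ / (2 * r) ≤ 1 := by
    rw [div_le_one (by positivity)]; exact hεΔ
  have hmono : Real.arcsin (ε * Δ / (2 * r)) ≤ Real.arcsin (d / (2 * r)) := by
    exact Real.monotone_arcsin (div_le_div_of_nonneg_right hd (by positivity))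
  have hself : ε * Δ / (2 * r) ≤ Real.arcsin (ε * Δ / (2 * r)) := by
    have hnn : 0 ≤ Real.arcsin (ε * Δ / (2 * r)) := Real.arcsin_nonneg.2 hx0
    have := Real.sin_le hnn
    rwa [Real.sin_arcsin (by linarith) hx1] at this
  have : ε * Δ / r = 2 * (ε * Δ / (2 * r)) := by field_simp
  rw [this]
  linarith
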